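/- Let G be a graph and let G' be the digraph obtained from G by replacing each edge {x,y} of G by the pair of arcs (x,y) and (y,x). Then D_0(G') ≤ max(2, D_0(G)), where D_0(G) is computed in the first-order language of graphs and D_0(G') in the first-order language of digraphs. -/

import Mathlib

namespace PaperFO

/-- First-order formulas in a language with equality `eq` and one binary
relation symbol `rel` (adjacency `~` for graphs, the arc relation `↦` for
digraphs).  Variables are indexed by natural numbers (variable `xᵢ` of the
paper corresponds to `i - 1 : ℕ`). -/
inductive Fml : Type
  | eq : ℕ → ℕ → Fml
  | rel : ℕ → ℕ → Fml
  | not : Fml → Fml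
  | and : Fml → Fml → Fml
  | or : Fml → Fml → Fml
  | all : ℕ → Fml → Fml
  | ex : ℕ → Fml → Fml

namespace Fml

/-- Truth of a formula in the structure `(V, r)` under the assignment `σ`. -/
def eval {V : Type} (r : V → V → Prop) (σ : ℕ → V) : Fml → Prop
  | eq i j => σ i = σ j
  | rel i j => r (σ i) (σ j)
  | not φ => ¬ eval r σ φ
  | and φ ψ => eval r σ φ ∧ eval r σ ψ
  | or φ ψ => eval r σ φ ∨ eval r σ ψ
  | all i φ => ∀ v : V, eval r (Function.update σ i v) φ
  | ex i φ => ∃ v : V, eval r (Function.update σ i v) φ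

/-- The free variables of a formula. -/
def freeVars : Fml → Finset ℕ
  | eq i j => {i, j}
  | rel i j => {i, j}
  | not φ => freeVars φ
  | and φ ψ => freeVars φ ∪ freeVars ψ
  | or φ ψ => freeVars φ ∪ freeVars ψ
  | all i φ => (freeVars φ).erase i
  | ex i φ => (freeVars φ).erase i

/-- A sentence is a formula without free variables. -/
def IsSentence (φ : Fml) : Prop := φ.freeVars = ∅

/-- The quantifier depth (= quantifier rank) of a formula: the maximum
number of nested quantifiers. -/
def depth : Fml → ℕ
  | eq _ _ => 0
  | rel _ _ => 0
  | not φ => depth φ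
  | and φ ψ => max (depth φ) (depth ψ)
  | or φ ψ => max (depth φ) (depth ψ)
  | all _ φ => depth φ + 1
  | ex _ φ => depth φ + 1

/-- A formula is atomic if it is of the form `x = y` or `x ~ y`. -/
def IsAtomic : Fml → Prop
  | eq _ _ => True
  | rel _ _ => True
  | _ => False

/-- Negations occur only in front of atomic subformulas. -/
def NegAtomic : Fml → Prop
  | eq _ _ => True
  | rel _ _ => True
  | not φ => IsAtomic φ
  | and φ ψ => NegAtomic φ ∧ NegAtomic ψ
  | or φ ψ => NegAtomic φ ∧ NegAtomic ψ
  | all _ φ => NegAtomic φ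
  | ex _ φ => NegAtomic φ

/-- The set of maximal sequences of nested quantifiers of a formula,
recorded as lists of Booleans read from the outermost quantifier inwards
(`true` = `∃`, `false` = `∀`).  Every sequence of nested quantifiers of the
formula is a (contiguous) subsequence of one of these. -/
def qstrings : Fml → Set (List Bool)
  | eq _ _ => {[]}
  | rel _ _ => {[]}
  | not φ => qstrings φ
  | and φ ψ => qstrings φ ∪ qstrings ψ
  | or φ ψ => qstrings φ ∪ qstrings ψ
  | all _ φ => (List.cons false) '' qstrings φ
  | ex _ φ => (List.cons true) '' qstrings φ

end Fml

/-- The number of quantifier alternations (occurrences of `∀∃` or `∃∀`) in a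
sequence of nested quantifiers. -/
def altCount : List Bool → ℕ
  | [] => 0
  | [_] => 0
  | a :: b :: l => (if a = b then 0 else 1) + altCount (b :: l)

namespace Fml

/-- Every sequence of nested quantifiers has at most `a` quantifier
alternations. -/
def AltLe (φ : Fml) (a : ℕ) : Prop := ∀ s ∈ φ.qstrings, altCount s ≤ a

/-- An `a`-alternating formula: negations occur only in front of atomic
subformulas and every sequence of nested quantifiers has at most `a`
quantifier alternations. -/
def AltFml (a : ℕ) (φ : Fml) : Prop := φ.NegAtomic ∧ φ.AltLe a

/-- A 0-alternating formula: negations occur only in front of atomic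
subformulas and no sequence of nested quantifiers contains a quantifier
alternation. -/
def ZeroAlt (φ : Fml) : Prop := φ.NegAtomic ∧ φ.AltLe 0

end Fml

/-- `logStar n` is the minimum number of iterations of the binary logarithm
needed to bring `n` to `1` or below. -/
def logStar (n : ℕ) : ℕ :=
  if h : n ≤ 1 then 0 else logStar (Nat.log 2 n) + 1
decreasing_by exact Nat.log_lt_self 2 (by omega)

/-- The tower function: `tower 0 = 1`, `tower (i+1) = 2 ^ tower i`. -/
def tower : ℕ → ℕ
  | 0 => 1
  | i + 1 => 2 ^ tower i

end PaperFO

namespace PaperFO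

/-- A sentence is true on the graph `G` (graphs interpret `Fml.rel` as the
adjacency relation `~`). -/
def GModels {V : Type} (G : SimpleGraph V) (φ : Fml) : Prop :=
  ∀ σ : ℕ → V, φ.eval G.Adj σ

/-- The sentence `φ` defines the graph `G`: it is a sentence, it is true on
`G`, and it fails on every (finite, nonempty) graph not isomorphic to `G`. -/
def Defines {V : Type} (G : SimpleGraph V) (φ : Fml) : Prop :=
  φ.IsSentence ∧ GModels G φ ∧
    ∀ (W : Type) (_ : Fintype W) (_ : Nonempty W) (H : SimpleGraph W),
      ¬ Nonempty (G ≃g H) → ¬ GModels H φ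

end PaperFO

namespace PaperFO

/-- A sentence is true on the digraph `(V, r)` (digraphs interpret `Fml.rel`
as the arc relation `↦`). -/
def DModels {V : Type} (r : V → V → Prop) (φ : Fml) : Prop :=
  ∀ σ : ℕ → V, φ.eval r σ

/-- Isomorphism of digraphs. -/
def DIso {V W : Type} (r : V → V → Prop) (r' : W → W → Prop) : Prop :=
  ∃ e : V ≃ W, ∀ a b : V, r a b ↔ r' (e a) (e b)

/-- The sentence `φ` defines the digraph `(V, r)`: it is a sentence, it is
true on `(V, r)`, and it fails on every (finite, nonempty) digraph not
isomorphic to `(V, r)`. -/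
def DDefines {V : Type} (r : V → V → Prop) (φ : Fml) : Prop :=
  φ.IsSentence ∧ DModels r φ ∧
    ∀ (W : Type) (_ : Fintype W) (_ : Nonempty W) (r' : W → W → Prop),
      ¬ DIso r r' → ¬ DModels r' φ

end PaperFO

namespace PaperFO

theorem statement_3 {V : Type} [Fintype V] [Nonempty V] (G : SimpleGraph V)
    (φ : Fml) (hφ : φ.ZeroAlt) (hdef : Defines G φ) :
    ∃ ψ : Fml, ψ.ZeroAlt ∧ DDefines (fun x y : V => G.Adj x y) ψ ∧
      ψ.depth ≤ max 2 φ.depth := by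
  obtain ⟨hsent, hmod, hneg⟩ := hdef
  refine ⟨.and φ (.and (.all 0 (.all 1 (.or (.not (.rel 0 1)) (.rel 1 0))))
      (.all 0 (.not (.rel 0 0)))), ?_, ⟨?_, ?_, ?_⟩, ?_⟩
  · refine ⟨⟨hφ.1, ⟨⟨trivial, trivial⟩, trivial⟩⟩, ?_⟩
    intro s hs
    rcases hs with h | h | h
    · exact hφ.2 s h
    · simp only [Fml.qstrings, Set.union_self, Set.image_singleton, Set.mem_singleton_iff] at h
      subst h; decide
    · simp only [Fml.qstrings, Set.union_self, Set.image_singleton, Set.mem_singleton_iff] at h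
      subst h; decide
  · show Fml.freeVars _ = ∅
    simp only [Fml.freeVars, Fml.IsSentence.eq_1] at hsent ⊢
    rw [hsent]; decide
  · intro σ
    refine ⟨hmod σ, ?_, ?_⟩
    · intro v w
      show ¬ G.Adj _ _ ∨ G.Adj _ _
      simp only [Function.update]
      by_cases h : G.Adj v w
      · exact Or.inr (by simpa using h.symm)
      · exact Or.inl (by simpa using h)
    · intro v
      show ¬ G.Adj _ _
      simp [Function.update]
  · intro W _ _ r' hniso hmodr
    have hsymm : ∀ a b : W, r' a b → r' b a := by
      intro a b hab
      have h := (hmodr (fun _ => a)).2.1 a b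
      simp only [Fml.eval, Function.update] at h
      rcases h with h | h
      · exact absurd (by simpa using hab) (by simpa using h)
      · simpa using h
    have hloop : ∀ a : W, ¬ r' a a := by
      intro a
      have h := (hmodr (fun _ => a)).2.2 a
      simpa [Fml.eval, Function.update] using h
    set H : SimpleGraph W := ⟨r', ⟨hsymm⟩, ⟨hloop⟩⟩ with hH
    have hGH : GModels H φ := fun σ => (hmodr σ).1
    by_cases hiso : Nonempty (G ≃g H)
    · obtain ⟨e⟩ := hiso
      exact hniso ⟨e.toEquiv, fun a b => (e.map_adj_iff (v := a) (w := b)).symm⟩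
    · exact hneg W ‹_› ‹_› H hiso hGH
  · simp only [Fml.depth]
    omega

end PaperFO
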